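/- If f ∈ C²[0,1] ∩ C^{1}[0,1], then for all n ≥ j ≥ 2 and x ∈ [0,1], |f(x) − B_{n,j}(f;x)| ≤ (x(1−x)/(2n)) ‖f''‖_∞ + ((j−1)/n) ‖f'‖_∞. -/

import Mathlib

open Set Finset

/-- Bernstein basis polynomial `p_{n,k}(x) = C(n,k) x^k (1-x)^{n-k}`. -/
noncomputable def bp (n k : ℕ) (x : ℝ) : ℝ :=
  (n.choose k : ℝ) * x ^ k * (1 - x) ^ (n - k)

/-- AKR node `t_{n,k}^j = (k(k-1)⋯(k-j+1)/(n(n-1)⋯(n-j+1)))^{1/j}`. -/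
noncomputable def akrNode (n j k : ℕ) : ℝ :=
  ((∏ i ∈ Finset.range j, ((k : ℝ) - i)) / (∏ i ∈ Finset.range j, ((n : ℝ) - i))) ^ ((j : ℝ)⁻¹)

/-- Classical Bernstein operator. -/
noncomputable def bern (n : ℕ) (f : ℝ → ℝ) (x : ℝ) : ℝ :=
  ∑ k ∈ Finset.range (n + 1), f ((k : ℝ) / n) * bp n k x

/-- Aldaz–Kounchev–Render operator. -/
noncomputable def akr (n j : ℕ) (f : ℝ → ℝ) (x : ℝ) : ℝ :=
  ∑ k ∈ Finset.range (n + 1), f (akrNode n j k) * bp n k x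

/-- Bivariate tensor-product Bernstein operator. -/
noncomputable def bern2 (n m : ℕ) (f : ℝ → ℝ → ℝ) (x y : ℝ) : ℝ :=
  ∑ i ∈ Finset.range (n + 1), ∑ k ∈ Finset.range (m + 1),
    f ((i : ℝ) / n) ((k : ℝ) / m) * bp n i x * bp m k y

/-- Bivariate tensor-product AKR operator. -/
noncomputable def akr2 (n m j : ℕ) (f : ℝ → ℝ → ℝ) (x y : ℝ) : ℝ :=
  ∑ i ∈ Finset.range (n + 1), ∑ k ∈ Finset.range (m + 1),
    f (akrNode n j i) (akrNode m j k) * bp n i x * bp m k y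

/-! ### Auxiliary lemmas -/

lemma bp_eval (n k : ℕ) (x : ℝ) : (bernsteinPolynomial ℝ n k).eval x = bp n k x := by
  simp [bernsteinPolynomial, bp, mul_assoc]

lemma bp_nonneg (n k : ℕ) {x : ℝ} (hx : x ∈ Icc (0:ℝ) 1) : 0 ≤ bp n k x := by
  have h1 : (0:ℝ) ≤ x := hx.1
  have h2 : (0:ℝ) ≤ 1 - x := by linarith [hx.2]
  exact mul_nonneg (mul_nonneg (Nat.cast_nonneg _) (pow_nonneg h1 _)) (pow_nonneg h2 _)

lemma sum_bp (n : ℕ) (x : ℝ) : ∑ k ∈ Finset.range (n+1), bp n k x = 1 := by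
  have h := congrArg (Polynomial.eval x) (bernsteinPolynomial.sum ℝ n)
  simpa [Polynomial.eval_finset_sum, bp_eval] using h

lemma sum_k_bp (n : ℕ) (x : ℝ) :
    ∑ k ∈ Finset.range (n+1), (k:ℝ) * bp n k x = n * x := by
  have h := congrArg (Polynomial.eval x) (bernsteinPolynomial.sum_smul ℝ n)
  simpa [Polynomial.eval_finset_sum, bp_eval, nsmul_eq_mul] using h

lemma sum_kk_bp (n : ℕ) (x : ℝ) :
    ∑ k ∈ Finset.range (n+1), ((k:ℝ) * ((k:ℝ) - 1)) * bp n k x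
      = ((n * (n-1) : ℕ) : ℝ) * x^2 := by
  have h := congrArg (Polynomial.eval x) (bernsteinPolynomial.sum_mul_smul ℝ n)
  simp [Polynomial.eval_finset_sum, bp_eval, nsmul_eq_mul] at h
  rw [Nat.cast_mul, ← h]
  apply Finset.sum_congr rfl
  intro k _
  rcases k with _ | m
  · simp
  · push_cast [Nat.succ_sub_one]
    ring

lemma sum_var (n : ℕ) (hn : 0 < n) (x : ℝ) :
    ∑ k ∈ Finset.range (n+1), ((k:ℝ)/n - x)^2 * bp n k x = x*(1-x)/n := by
  have hn0 : (n:ℝ) ≠ 0 := Nat.cast_ne_zero.2 hn.ne'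
  have e : ∀ k ∈ Finset.range (n+1), ((k:ℝ)/n - x)^2 * bp n k x
      = ((n:ℝ)^2)⁻¹ * (((k:ℝ)*((k:ℝ)-1)) * bp n k x)
        + (((n:ℝ)^2)⁻¹ - 2*x/n) * ((k:ℝ) * bp n k x) + x^2 * bp n k x := by
    intro k _
    field_simp
    ring
  rw [Finset.sum_congr rfl e]
  rw [Finset.sum_add_distrib, Finset.sum_add_distrib, ← Finset.mul_sum, ← Finset.mul_sum,
    ← Finset.mul_sum, sum_kk_bp, sum_k_bp, sum_bp]
  rw [Nat.cast_mul, Nat.cast_sub (by omega : 1 ≤ n)]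
  push_cast
  field_simp
  ring

lemma node_small {n j k : ℕ} (hj : 2 ≤ j) (hk : k < j) : akrNode n j k = 0 := by
  have hz : (∏ i ∈ Finset.range j, ((k : ℝ) - i)) = 0 :=
    Finset.prod_eq_zero (Finset.mem_range.2 hk) (by simp)
  rw [akrNode, hz, zero_div, Real.zero_rpow]
  exact inv_ne_zero (Nat.cast_ne_zero.2 (by omega))

lemma den_pos {n j : ℕ} (hn : j ≤ n) : 0 < ∏ i ∈ Finset.range j, ((n : ℝ) - i) := by
  apply Finset.prod_pos
  intro i hi
  have : i < n := lt_of_lt_of_le (Finset.mem_range.1 hi) hn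
  have : (i:ℝ) < n := by exact_mod_cast this
  linarith

lemma node_nonneg {n j k : ℕ} (hj : 2 ≤ j) (hn : j ≤ n) : 0 ≤ akrNode n j k := by
  rcases lt_or_ge k j with hk | hk
  · rw [node_small hj hk]
  · apply Real.rpow_nonneg
    apply div_nonneg _ (den_pos hn).le
    apply Finset.prod_nonneg
    intro i hi
    have : i < k := lt_of_lt_of_le (Finset.mem_range.1 hi) hk
    have : (i:ℝ) < k := by exact_mod_cast this
    linarith

lemma pow_rpow_inv (a : ℝ) (ha : 0 ≤ a) {j : ℕ} (hj : j ≠ 0) :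
    (a ^ j) ^ ((j:ℝ)⁻¹) = a := by
  rw [← Real.rpow_natCast a j, ← Real.rpow_mul ha, mul_inv_cancel₀ (Nat.cast_ne_zero.2 hj),
    Real.rpow_one]

lemma node_le {n j k : ℕ} (hj : 2 ≤ j) (hn : j ≤ n) (hk : k ≤ n) :
    akrNode n j k ≤ (k:ℝ) / n := by
  have hn0 : (0:ℝ) < n := by exact_mod_cast lt_of_lt_of_le (by omega : 0 < j) hn
  have hkn : (0:ℝ) ≤ (k:ℝ)/n := div_nonneg (Nat.cast_nonneg _) hn0.le
  rcases lt_or_ge k j with hkj | hkj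
  · rw [node_small hj hkj]; exact hkn
  · have hbase : (∏ i ∈ Finset.range j, ((k : ℝ) - i)) / (∏ i ∈ Finset.range j, ((n : ℝ) - i))
        ≤ ((k:ℝ)/n) ^ j := by
      rw [← Finset.prod_div_distrib]
      calc ∏ i ∈ Finset.range j, ((k:ℝ) - i)/((n:ℝ) - i)
          ≤ ∏ _i ∈ Finset.range j, (k:ℝ)/n := by
            apply Finset.prod_le_prod
            · intro i hi
              have h1 : i < k := lt_of_lt_of_le (Finset.mem_range.1 hi) hkj
              have h1' : (i:ℝ) < k := by exact_mod_cast h1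
              have h2 : i < n := lt_of_lt_of_le h1 hk
              have h2' : (i:ℝ) < n := by exact_mod_cast h2
              exact div_nonneg (by linarith) (by linarith)
            · intro i hi
              have h1 : i < k := lt_of_lt_of_le (Finset.mem_range.1 hi) hkj
              have h1' : (i:ℝ) < k := by exact_mod_cast h1
              have h2' : (i:ℝ) < n := by exact_mod_cast lt_of_lt_of_le h1 hk
              rw [div_le_div_iff₀ (by linarith) hn0]
              have hkn' : (k:ℝ) ≤ n := by exact_mod_cast hk
              nlinarith [Nat.cast_nonneg (α := ℝ) i]
        _ = ((k:ℝ)/n) ^ j := by rw [Finset.prod_const, Finset.card_range]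
    have h0 : 0 ≤ (∏ i ∈ Finset.range j, ((k : ℝ) - i)) / (∏ i ∈ Finset.range j, ((n : ℝ) - i)) := by
      apply div_nonneg _ (den_pos hn).le
      apply Finset.prod_nonneg
      intro i hi
      have : (i:ℝ) < k := by exact_mod_cast lt_of_lt_of_le (Finset.mem_range.1 hi) hkj
      linarith
    calc akrNode n j k ≤ (((k:ℝ)/n) ^ j) ^ ((j:ℝ)⁻¹) :=
          Real.rpow_le_rpow h0 hbase (by positivity)
      _ = (k:ℝ)/n := pow_rpow_inv _ hkn (by omega)

lemma node_ge {n j k : ℕ} (hj : 2 ≤ j) (hn : j ≤ n) (hk : k ≤ n) (hkj : j ≤ k) :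
    ((k:ℝ) - j + 1) / ((n:ℝ) - j + 1) ≤ akrNode n j k := by
  have hjk : (j:ℝ) ≤ k := by exact_mod_cast hkj
  have hjn : (j:ℝ) ≤ n := by exact_mod_cast hn
  have hkn : (k:ℝ) ≤ n := by exact_mod_cast hk
  set c : ℝ := ((k:ℝ) - j + 1) / ((n:ℝ) - j + 1) with hc
  have hden : (0:ℝ) < (n:ℝ) - j + 1 := by linarith
  have hcnn : 0 ≤ c := div_nonneg (by linarith) hden.le
  have hbase : c ^ j ≤ (∏ i ∈ Finset.range j, ((k : ℝ) - i)) / (∏ i ∈ Finset.range j, ((n : ℝ) - i)) := by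
    rw [← Finset.prod_div_distrib]
    have hcj : c ^ j = ∏ _i ∈ Finset.range j, c := by
      rw [Finset.prod_const, Finset.card_range]
    rw [hcj]
    apply Finset.prod_le_prod
    · intro i _; exact hcnn
    · intro i hi
      have hij : (i:ℝ) ≤ (j:ℝ) - 1 := by
        have : i + 1 ≤ j := Finset.mem_range.1 hi
        have : (i:ℝ) + 1 ≤ j := by exact_mod_cast this
        linarith
      have hik : (i:ℝ) < k := by linarith
      have hin : (i:ℝ) < n := by linarith
      rw [hc, div_le_div_iff₀ hden (by linarith)]
      nlinarith [mul_nonneg (sub_nonneg.2 hij) (sub_nonneg.2 hkn)]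
  calc c = (c ^ j) ^ ((j:ℝ)⁻¹) := (pow_rpow_inv _ hcnn (by omega)).symm
    _ ≤ akrNode n j k := Real.rpow_le_rpow (by positivity) hbase (by positivity)

lemma node_key {n j k : ℕ} (hj : 2 ≤ j) (hn : j ≤ n) (hk : k ≤ n) :
    (k:ℝ)/n - akrNode n j k ≤ ((j:ℝ) - 1) / n := by
  have hn0 : (0:ℝ) < n := by exact_mod_cast lt_of_lt_of_le (by omega : 0 < j) hn
  rcases lt_or_ge k j with hkj | hkj
  · rw [node_small hj hkj, sub_zero]
    have hkj' : (k:ℝ) ≤ (j:ℝ) - 1 := by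
      have : (k:ℝ) + 1 ≤ j := by exact_mod_cast hkj
      linarith
    gcongr
  · have hlow := node_ge hj hn hk hkj
    have hjk : (j:ℝ) ≤ k := by exact_mod_cast hkj
    have hjn : (j:ℝ) ≤ n := by exact_mod_cast hn
    have hkn : (k:ℝ) ≤ n := by exact_mod_cast hk
    have hden : (0:ℝ) < (n:ℝ) - j + 1 := by linarith
    have hj2 : (2:ℝ) ≤ j := by exact_mod_cast hj
    have step : ((k:ℝ) - j + 1) / n ≤ ((k:ℝ) - j + 1) / ((n:ℝ) - j + 1) := by
      apply div_le_div_of_nonneg_left (by linarith) hden (by linarith)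
    have h2 : (k:ℝ)/n - akrNode n j k ≤ (k:ℝ)/n - ((k:ℝ) - j + 1)/n := by
      have := step.trans hlow
      linarith
    calc (k:ℝ)/n - akrNode n j k ≤ (k:ℝ)/n - ((k:ℝ) - j + 1)/n := h2
      _ = ((j:ℝ) - 1)/n := by field_simp; ring

lemma taylor_one_side (g g' : ℝ → ℝ)
    (hg : ∀ t ∈ Icc (0:ℝ) 1, HasDerivWithinAt g (g' t) (Icc 0 1) t)
    (M : ℝ) {x : ℝ} (hx : x ∈ Icc (0:ℝ) 1)
    (hL : ∀ t ∈ Icc (0:ℝ) 1, |g' t - g' x| ≤ M * |t - x|) :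
    ∀ t ∈ Icc (0:ℝ) 1, g t - g x - g' x * (t - x) ≤ M / 2 * (t - x) ^ 2 := by
  set F : ℝ → ℝ := fun t => M / 2 * (t - x) ^ 2 - (g t - g x - g' x * (t - x)) with hF
  have hgc : ContinuousOn g (Icc (0:ℝ) 1) := fun t ht => (hg t ht).continuousWithinAt
  have hFc : ContinuousOn F (Icc (0:ℝ) 1) := by
    apply ContinuousOn.sub
    · exact (continuousOn_const.mul (((continuous_id.sub continuous_const).pow 2).continuousOn))
    · exact (hgc.sub continuousOn_const).sub
        ((continuous_const.mul (continuous_id.sub continuous_const)).continuousOn)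
  have hFd : ∀ s ∈ Ioo (0:ℝ) 1, HasDerivAt F (M * (s - x) - (g' s - g' x)) s := by
    intro s hs
    have hs' : s ∈ Icc (0:ℝ) 1 := Ioo_subset_Icc_self hs
    have hgd : HasDerivAt g (g' s) s :=
      (hg s hs').hasDerivAt (Icc_mem_nhds hs.1 hs.2)
    have h1 : HasDerivAt (fun t => M / 2 * (t - x) ^ 2) (M / 2 * (2 * (s - x) ^ 1 * 1)) s :=
      (((hasDerivAt_id s).sub_const x).pow 2).const_mul (M / 2)
    have h2 : HasDerivAt (fun t => g t - g x - g' x * (t - x)) (g' s - g' x * 1) s :=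
      (hgd.sub_const (g x)).sub (((hasDerivAt_id s).sub_const x).const_mul (g' x))
    have := h1.sub h2
    refine this.congr_deriv ?_
    ring
  have hFx : F x = 0 := by simp [hF]
  intro t ht
  have key : 0 ≤ F t := by
    rcases le_total x t with h | h
    · have mono : MonotoneOn F (Icc x 1) := by
        apply monotoneOn_of_hasDerivWithinAt_nonneg (convex_Icc x 1)
          (hFc.mono (Icc_subset_Icc hx.1 le_rfl))
          (f' := fun s => M * (s - x) - (g' s - g' x))
        · intro s hs
          rw [interior_Icc] at hs
          have hs' : s ∈ Ioo (0:ℝ) 1 := ⟨lt_of_le_of_lt hx.1 hs.1, hs.2⟩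
          exact (hFd s hs').hasDerivWithinAt
        · intro s hs
          rw [interior_Icc] at hs
          have hs' : s ∈ Icc (0:ℝ) 1 := ⟨(lt_of_le_of_lt hx.1 hs.1).le, hs.2.le⟩
          have := hL s hs'
          rw [abs_of_pos (sub_pos.2 hs.1)] at this
          have h2 := abs_le.1 this
          linarith [h2.2]
      have := mono ⟨le_rfl, hx.2⟩ ⟨h, ht.2⟩ h
      rw [hFx] at this
      exact this
    · have anti : AntitoneOn F (Icc (0:ℝ) x) := by
        apply antitoneOn_of_hasDerivWithinAt_nonpos (convex_Icc 0 x)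
          (hFc.mono (Icc_subset_Icc le_rfl hx.2))
          (f' := fun s => M * (s - x) - (g' s - g' x))
        · intro s hs
          rw [interior_Icc] at hs
          have hs' : s ∈ Ioo (0:ℝ) 1 := ⟨hs.1, lt_of_lt_of_le hs.2 hx.2⟩
          exact (hFd s hs').hasDerivWithinAt
        · intro s hs
          rw [interior_Icc] at hs
          have hs' : s ∈ Icc (0:ℝ) 1 := ⟨hs.1.le, (lt_of_lt_of_le hs.2 hx.2).le⟩
          have := hL s hs'
          rw [abs_of_neg (sub_neg.2 hs.2), neg_sub] at this
          have h2 := abs_le.1 this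
          linarith [h2.1]
      have := anti ⟨ht.1, h⟩ ⟨hx.1, le_rfl⟩ h
      rw [hFx] at this
      exact this
  simp only [hF] at key
  linarith

lemma taylor_bound (g g' : ℝ → ℝ)
    (hg : ∀ t ∈ Icc (0:ℝ) 1, HasDerivWithinAt g (g' t) (Icc 0 1) t)
    (M : ℝ) {x : ℝ} (hx : x ∈ Icc (0:ℝ) 1)
    (hL : ∀ t ∈ Icc (0:ℝ) 1, |g' t - g' x| ≤ M * |t - x|) :
    ∀ t ∈ Icc (0:ℝ) 1, |g t - g x - g' x * (t - x)| ≤ M / 2 * (t - x) ^ 2 := by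
  intro t ht
  rw [abs_le]
  constructor
  · have := taylor_one_side (fun t => -g t) (fun t => -g' t)
      (fun t ht => (hg t ht).neg) M hx
      (fun t ht => by rw [show -g' t - -g' x = -(g' t - g' x) by ring, abs_neg]; exact hL t ht) t ht
    linarith
  · exact taylor_one_side g g' hg M hx hL t ht

lemma sup_bound (h : ℝ → ℝ) (hc : ContinuousOn h (Icc 0 1)) :
    ∀ t ∈ Icc (0:ℝ) 1, |h t| ≤ ⨆ t : Icc (0:ℝ) 1, |h t| := by
  have himg : IsCompact ((fun y => |h y|) '' Icc (0:ℝ) 1) :=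
    isCompact_Icc.image_of_continuousOn hc.abs
  have hbdd : BddAbove (Set.range fun t : Icc (0:ℝ) 1 => |h t|) := by
    have hr : Set.range (fun t : Icc (0:ℝ) 1 => |h t|) = (fun y => |h y|) '' Icc (0:ℝ) 1 :=
      Set.range_restrict (fun y => |h y|) (Icc (0:ℝ) 1)
    rw [hr]
    exact himg.bddAbove
  intro t ht
  exact le_ciSup hbdd ⟨t, ht⟩

theorem stmt16 (n j : ℕ) (hj : 2 ≤ j) (hn : j ≤ n) (f f' f'' : ℝ → ℝ)
    (hf' : ∀ x ∈ Icc (0:ℝ) 1, HasDerivWithinAt f (f' x) (Icc 0 1) x)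
    (hf'' : ∀ x ∈ Icc (0:ℝ) 1, HasDerivWithinAt f' (f'' x) (Icc 0 1) x)
    (hc' : ContinuousOn f' (Icc 0 1))
    (hc'' : ContinuousOn f'' (Icc 0 1)) :
    ∀ x ∈ Icc (0:ℝ) 1,
      |f x - akr n j f x| ≤
        x * (1 - x) / (2 * n) * (⨆ t : Icc (0:ℝ) 1, |f'' t|) +
          (((j : ℝ) - 1) / n) * (⨆ t : Icc (0:ℝ) 1, |f' t|) := by
  intro x hx
  have hn0 : 0 < n := lt_of_lt_of_le (by omega) hn
  have hn0' : (0:ℝ) < n := by exact_mod_cast hn0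
  have hnne : (n:ℝ) ≠ 0 := hn0'.ne'
  set M2 := ⨆ t : Icc (0:ℝ) 1, |f'' t| with hM2def
  set M1 := ⨆ t : Icc (0:ℝ) 1, |f' t| with hM1def
  have hM2 : ∀ t ∈ Icc (0:ℝ) 1, |f'' t| ≤ M2 := sup_bound f'' hc''
  have hM1 : ∀ t ∈ Icc (0:ℝ) 1, |f' t| ≤ M1 := sup_bound f' hc'
  have hM1nn : 0 ≤ M1 := le_trans (abs_nonneg _) (hM1 0 ⟨le_rfl, zero_le_one⟩)
  have hbpnn : ∀ k, 0 ≤ bp n k x := fun k => bp_nonneg n k hx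
  -- Lipschitz bound for f with constant M1
  have hlip : ∀ a ∈ Icc (0:ℝ) 1, ∀ b ∈ Icc (0:ℝ) 1, |f a - f b| ≤ M1 * |a - b| := by
    intro a ha b hb
    have := (convex_Icc (0:ℝ) 1).norm_image_sub_le_of_norm_hasDerivWithin_le hf'
      (fun t ht => by rw [Real.norm_eq_abs]; exact hM1 t ht) hb ha
    simpa [Real.norm_eq_abs] using this
  -- Lipschitz bound for f' with constant M2
  have hlip' : ∀ t ∈ Icc (0:ℝ) 1, |f' t - f' x| ≤ M2 * |t - x| := by
    intro t ht
    have := (convex_Icc (0:ℝ) 1).norm_image_sub_le_of_norm_hasDerivWithin_le hf''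
      (fun s hs => by rw [Real.norm_eq_abs]; exact hM2 s hs) hx ht
    simpa [Real.norm_eq_abs] using this
  have htay := taylor_bound f f' hf' M2 hx hlip'
  -- membership facts
  have hmem : ∀ k ∈ Finset.range (n+1), (k:ℝ)/n ∈ Icc (0:ℝ) 1 := by
    intro k hk
    have hk' : k ≤ n := by
      have := Finset.mem_range.1 hk; omega
    constructor
    · positivity
    · rw [div_le_one hn0']
      exact_mod_cast hk'
  have hnode : ∀ k ∈ Finset.range (n+1), akrNode n j k ∈ Icc (0:ℝ) 1 := by
    intro k hk
    have hk' : k ≤ n := by have := Finset.mem_range.1 hk; omega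
    refine ⟨node_nonneg hj hn, ?_⟩
    refine (node_le hj hn hk').trans ?_
    rw [div_le_one hn0']
    exact_mod_cast hk'
  -- basic sums
  have hS0 := sum_bp n x
  have hS1 : ∑ k ∈ Finset.range (n+1), ((k:ℝ)/n - x) * bp n k x = 0 := by
    have e : ∀ k ∈ Finset.range (n+1), ((k:ℝ)/n - x) * bp n k x
        = (n:ℝ)⁻¹ * ((k:ℝ) * bp n k x) - x * bp n k x := by
      intro k _; field_simp
    rw [Finset.sum_congr rfl e, Finset.sum_sub_distrib, ← Finset.mul_sum, ← Finset.mul_sum,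
      sum_k_bp, sum_bp]
    field_simp
    ring
  have hvar := sum_var n hn0 x
  -- decomposition
  have expand : f x - akr n j f x
      = (∑ k ∈ Finset.range (n+1), (f x - f ((k:ℝ)/n) + f' x * ((k:ℝ)/n - x)) * bp n k x)
        + (∑ k ∈ Finset.range (n+1), (f ((k:ℝ)/n) - f (akrNode n j k)) * bp n k x) := by
    rw [← Finset.sum_add_distrib]
    have e : ∀ k ∈ Finset.range (n+1),
        (f x - f ((k:ℝ)/n) + f' x * ((k:ℝ)/n - x)) * bp n k x
          + (f ((k:ℝ)/n) - f (akrNode n j k)) * bp n k x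
        = (f x * bp n k x - f (akrNode n j k) * bp n k x)
            + f' x * (((k:ℝ)/n - x) * bp n k x) := by
      intro k _; ring
    rw [Finset.sum_congr rfl e, Finset.sum_add_distrib, Finset.sum_sub_distrib,
      ← Finset.mul_sum, ← Finset.mul_sum, hS0, hS1, mul_zero, mul_one, add_zero, akr]
  -- bound the Taylor part
  have boundA : |∑ k ∈ Finset.range (n+1), (f x - f ((k:ℝ)/n) + f' x * ((k:ℝ)/n - x)) * bp n k x|
      ≤ x*(1-x)/(2*n) * M2 := by
    calc |∑ k ∈ Finset.range (n+1), (f x - f ((k:ℝ)/n) + f' x * ((k:ℝ)/n - x)) * bp n k x|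
        ≤ ∑ k ∈ Finset.range (n+1), |(f x - f ((k:ℝ)/n) + f' x * ((k:ℝ)/n - x)) * bp n k x| :=
          Finset.abs_sum_le_sum_abs _ _
      _ ≤ ∑ k ∈ Finset.range (n+1), (M2/2 * ((k:ℝ)/n - x)^2) * bp n k x := by
          apply Finset.sum_le_sum
          intro k hk
          rw [abs_mul, abs_of_nonneg (hbpnn k)]
          apply mul_le_mul_of_nonneg_right _ (hbpnn k)
          have h1 := htay ((k:ℝ)/n) (hmem k hk)
          calc |f x - f ((k:ℝ)/n) + f' x * ((k:ℝ)/n - x)|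
              = |f ((k:ℝ)/n) - f x - f' x * ((k:ℝ)/n - x)| := by
                rw [← abs_neg]; congr 1; ring
            _ ≤ M2/2 * ((k:ℝ)/n - x)^2 := h1
      _ = M2/2 * ∑ k ∈ Finset.range (n+1), ((k:ℝ)/n - x)^2 * bp n k x := by
          rw [Finset.mul_sum]
          apply Finset.sum_congr rfl
          intro k _; ring
      _ = M2/2 * (x*(1-x)/n) := by rw [hvar]
      _ = x*(1-x)/(2*n) * M2 := by ring
  -- bound the node part
  have boundB : |∑ k ∈ Finset.range (n+1), (f ((k:ℝ)/n) - f (akrNode n j k)) * bp n k x|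
      ≤ ((j:ℝ)-1)/n * M1 := by
    calc |∑ k ∈ Finset.range (n+1), (f ((k:ℝ)/n) - f (akrNode n j k)) * bp n k x|
        ≤ ∑ k ∈ Finset.range (n+1), |(f ((k:ℝ)/n) - f (akrNode n j k)) * bp n k x| :=
          Finset.abs_sum_le_sum_abs _ _
      _ ≤ ∑ k ∈ Finset.range (n+1), (((j:ℝ)-1)/n * M1) * bp n k x := by
          apply Finset.sum_le_sum
          intro k hk
          rw [abs_mul, abs_of_nonneg (hbpnn k)]
          apply mul_le_mul_of_nonneg_right _ (hbpnn k)
          have hk' : k ≤ n := by have := Finset.mem_range.1 hk; omega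
          have h1 := hlip ((k:ℝ)/n) (hmem k hk) (akrNode n j k) (hnode k hk)
          have h2 : |(k:ℝ)/n - akrNode n j k| = (k:ℝ)/n - akrNode n j k :=
            abs_of_nonneg (sub_nonneg.2 (node_le hj hn hk'))
          rw [h2] at h1
          calc |f ((k:ℝ)/n) - f (akrNode n j k)| ≤ M1 * ((k:ℝ)/n - akrNode n j k) := h1
            _ ≤ M1 * (((j:ℝ)-1)/n) := by
                apply mul_le_mul_of_nonneg_left (node_key hj hn hk') hM1nn
            _ = ((j:ℝ)-1)/n * M1 := by ring
      _ = ((j:ℝ)-1)/n * M1 := by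
          rw [← Finset.mul_sum, hS0, mul_one]
  rw [expand]
  calc |(∑ k ∈ Finset.range (n+1), (f x - f ((k:ℝ)/n) + f' x * ((k:ℝ)/n - x)) * bp n k x)
      + (∑ k ∈ Finset.range (n+1), (f ((k:ℝ)/n) - f (akrNode n j k)) * bp n k x)|
      ≤ |∑ k ∈ Finset.range (n+1), (f x - f ((k:ℝ)/n) + f' x * ((k:ℝ)/n - x)) * bp n k x|
        + |∑ k ∈ Finset.range (n+1), (f ((k:ℝ)/n) - f (akrNode n j k)) * bp n k x| := abs_add_le _ _
    _ ≤ x*(1-x)/(2*n) * M2 + ((j:ℝ)-1)/n * M1 := add_le_add boundA boundB
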